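/- arXiv:1804.01172 — 2 statements merged into one kernel-verified Lean document; each statement's English description precedes it below -/
import Mathlib

section
/- Four symmetric sequences A, B, C, D of length n with entries in {±1} are Williamson sequences if and only if PSD_A(s) + PSD_B(s) + PSD_C(s) + PSD_D(s) = 4n for all s = 0, …, ⌊n/2⌋. -/
open Finset Complex


/-- The periodic autocorrelation function of the length-`n` sequence `a`. -/
def paf (n : ℕ) (a : ℕ → ℤ) (s : ℕ) : ℤ :=
  ∑ k ∈ Finset.range n, a k * a ((k + s) % n)

/-- `a` is a symmetric sequence of length `n`: `aᵢ = a_{n-i}` for `1 ≤ i < n`. -/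
def SymmSeq (n : ℕ) (a : ℕ → ℤ) : Prop := ∀ i, 1 ≤ i → i < n → a i = a (n - i)

/-- All entries of the length-`n` sequence `a` are `±1`. -/
def PMOne (n : ℕ) (a : ℕ → ℤ) : Prop := ∀ i < n, a i = 1 ∨ a i = -1

/-- The discrete Fourier transform of the length-`n` sequence `a`:
`DFT_a(s) = ∑_{k=0}^{n-1} a_k e^{2πiks/n}`. -/
noncomputable def dft (n : ℕ) (a : ℕ → ℤ) (s : ℤ) : ℂ :=
  ∑ k ∈ Finset.range n, (a k : ℂ) * Complex.exp (2 * Real.pi * Complex.I * k * s / n)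

/-- The power spectral density of the length-`n` sequence `a`. -/
noncomputable def psd (n : ℕ) (a : ℕ → ℤ) (s : ℤ) : ℝ :=
  ‖dft n a s‖ ^ 2

noncomputable def W (n : ℕ) : ℂ := Complex.exp (2 * Real.pi * Complex.I / n)

lemma W_ne (n : ℕ) : W n ≠ 0 := Complex.exp_ne_zero _

lemma W_zpow (n : ℕ) (m : ℤ) : W n ^ m = Complex.exp (2 * Real.pi * Complex.I * m / n) := by
  rw [W, ← Complex.exp_int_mul]; congr 1; ring

lemma W_n (n : ℕ) (hn : 0 < n) : W n ^ (n : ℤ) = 1 := by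
  rw [W_zpow]
  have hn' : (n:ℂ) ≠ 0 := by exact_mod_cast hn.ne'
  have : (2 * (Real.pi:ℂ) * Complex.I * ((n:ℤ):ℂ) / n) = 2 * Real.pi * Complex.I := by
    push_cast; field_simp
  rw [this, Complex.exp_two_pi_mul_I]

lemma W_zpow_mod (n : ℕ) (hn : 0 < n) (m : ℤ) : W n ^ (m % (n:ℤ)) = W n ^ m := by
  conv_rhs => rw [← Int.emod_add_mul_ediv m n]
  rw [zpow_add₀ (W_ne n), zpow_mul, W_n n hn, one_zpow, mul_one]

lemma W_congr (n : ℕ) (hn : 0 < n) {m m' : ℤ} (h : m % n = m' % n) : W n ^ m = W n ^ m' := by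
  rw [← W_zpow_mod n hn m, h, W_zpow_mod n hn]

lemma W_one_iff (n : ℕ) (hn : 0 < n) (m : ℤ) : W n ^ m = 1 ↔ (n:ℤ) ∣ m := by
  have hπ : (2 * (Real.pi:ℂ) * Complex.I : ℂ) ≠ 0 := by
    simp [Real.pi_ne_zero, Complex.I_ne_zero]
  have hn' : (n:ℂ) ≠ 0 := by exact_mod_cast hn.ne'
  rw [W_zpow, Complex.exp_eq_one_iff]
  constructor
  · rintro ⟨k, hk⟩
    refine ⟨k, ?_⟩
    field_simp at hk
    have hk' : 2 * (Real.pi:ℂ) * Complex.I * (m:ℂ) = 2 * (Real.pi:ℂ) * Complex.I * ((k:ℂ) * n) := by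
      linear_combination (2 * (Real.pi:ℂ) * Complex.I) * hk
    have := mul_left_cancel₀ hπ hk'
    exact_mod_cast this.trans (mul_comm _ _)
  · rintro ⟨k, rfl⟩
    exact ⟨k, by push_cast; field_simp⟩

lemma W_sum (n : ℕ) (hn : 0 < n) (m : ℤ) :
    ∑ s ∈ Finset.range n, W n ^ (m * s) = if (n:ℤ) ∣ m then (n:ℂ) else 0 := by
  have h1 : ∀ s : ℕ, W n ^ (m * s) = (W n ^ m) ^ s := by
    intro s; rw [zpow_mul, zpow_natCast]
  simp only [h1]
  split_ifs with h
  · rw [(W_one_iff n hn m).2 h]; simp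
  · have hx : W n ^ m ≠ 1 := fun hc => h ((W_one_iff n hn m).1 hc)
    rw [geom_sum_eq hx]
    have : (W n ^ m) ^ n = 1 := by
      rw [← zpow_natCast, ← zpow_mul, mul_comm, zpow_mul, W_n n hn, one_zpow]
    rw [this]; simp

lemma mod_B (n k j : ℕ) (hn : 0 < n) (hj : j < n) :
    (k + (j + (n - k % n)) % n) % n = j := by
  have h4 : k % n < n := Nat.mod_lt _ hn
  have h2 : k + (j + (n - k % n)) = j + n * (k / n) + n := by
    have h3 := Nat.mod_add_div k n
    omega
  calc (k + (j + (n - k % n)) % n) % n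
      = (k + (j + (n - k % n))) % n := Nat.ModEq.add_left k (Nat.mod_modEq _ n)
    _ = j % n := by rw [h2, Nat.add_mod_right, Nat.add_mul_mod_self_left]
    _ = j := Nat.mod_eq_of_lt hj

lemma mod_A (n k t : ℕ) (hn : 0 < n) (ht : t < n) :
    ((k + t) % n + (n - k % n)) % n = t := by
  have h4 : k % n < n := Nat.mod_lt _ hn
  have h2 : k + t + (n - k % n) = t + n * (k / n) + n := by
    have h3 := Nat.mod_add_div k n
    omega
  calc ((k + t) % n + (n - k % n)) % n
      = (k + t + (n - k % n)) % n := Nat.ModEq.add_right _ (Nat.mod_modEq _ n)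
    _ = t % n := by rw [h2, Nat.add_mod_right, Nat.add_mul_mod_self_left]
    _ = t := Nat.mod_eq_of_lt ht

lemma sum_range_mod {M : Type*} [AddCommMonoid M] (n : ℕ) (hn : 0 < n) (k : ℕ) (f : ℕ → M) :
    ∑ j ∈ Finset.range n, f j = ∑ t ∈ Finset.range n, f ((k + t) % n) := by
  apply Finset.sum_nbij' (i := fun j => (j + (n - k % n)) % n) (j := fun t => (k + t) % n)
  · intro j hj; simp only [Finset.mem_range] at *; exact Nat.mod_lt _ hn
  · intro t ht; simp only [Finset.mem_range] at *; exact Nat.mod_lt _ hn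
  · intro j hj; simp only [Finset.mem_range] at hj; exact mod_B n k j hn hj
  · intro t ht; simp only [Finset.mem_range] at ht; exact mod_A n k t hn ht
  · intro j hj; simp only [Finset.mem_range] at hj
    rw [mod_B n k j hn hj]

lemma W_conj (n : ℕ) (m : ℤ) : (starRingEnd ℂ) (W n ^ m) = W n ^ (-m) := by
  rw [W_zpow, W_zpow, ← Complex.exp_conj]
  congr 1
  rw [map_div₀]
  push_cast
  simp only [map_mul, map_ofNat, Complex.conj_I, Complex.conj_ofReal, map_intCast,
    Complex.conj_natCast]
  ring

lemma dft_eq (n : ℕ) (a : ℕ → ℤ) (s : ℤ) :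
    dft n a s = ∑ k ∈ Finset.range n, (a k : ℂ) * W n ^ ((k : ℤ) * s) := by
  unfold dft
  refine Finset.sum_congr rfl fun k _ => ?_
  rw [W_zpow]
  congr 1
  push_cast
  ring

lemma paf_zero (n : ℕ) (a : ℕ → ℤ) (hpa : PMOne n a) : paf n a 0 = n := by
  unfold paf
  rw [Finset.sum_congr rfl fun k hk => ?_, Finset.sum_const, Finset.card_range,
    nsmul_eq_mul, mul_one]
  rw [Nat.add_zero, Nat.mod_eq_of_lt (Finset.mem_range.1 hk)]
  rcases hpa k (Finset.mem_range.1 hk) with h | h <;> rw [h] <;> norm_num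

lemma paf_compl (n : ℕ) (hn : 0 < n) (a : ℕ → ℤ) (u v : ℕ) (huv : (u + v) % n = 0) :
    paf n a u = paf n a v := by
  unfold paf
  rw [sum_range_mod n hn v (fun k => a k * a ((k + u) % n))]
  refine Finset.sum_congr rfl fun t ht => ?_
  simp only [Finset.mem_range] at ht
  have h1 : ((v + t) % n + u) % n = t := by
    calc ((v + t) % n + u) % n = (v + t + u) % n := Nat.ModEq.add_right _ (Nat.mod_modEq _ n)
      _ = (t + (u + v)) % n := by ring_nf
      _ = t % n := by
          conv_rhs => rw [← Nat.add_zero t, ← huv]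
          exact (Nat.ModEq.add_left t (Nat.mod_modEq _ n)).symm
      _ = t := Nat.mod_eq_of_lt ht
  rw [h1, Nat.add_comm v t, mul_comm]

lemma psd_eq (n : ℕ) (hn : 0 < n) (a : ℕ → ℤ) (s : ℤ) :
    (psd n a s : ℂ) = ∑ t ∈ Finset.range n, (paf n a t : ℂ) * W n ^ ((t : ℤ) * s) := by
  have h0 : (psd n a s : ℂ) = dft n a s * (starRingEnd ℂ) (dft n a s) := by
    rw [Complex.mul_conj, psd, Complex.sq_norm]
  rw [h0, dft_eq, map_sum]
  simp only [map_mul, W_conj, map_intCast]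
  rw [Finset.sum_mul_sum, Finset.sum_comm]
  have hstep : ∀ k ∈ Finset.range n,
      ∑ j ∈ Finset.range n, (a j : ℂ) * W n ^ ((j:ℤ) * s) * ((a k : ℂ) * W n ^ (-((k:ℤ) * s)))
        = ∑ t ∈ Finset.range n, (a k : ℂ) * (a ((k + t) % n) : ℂ) * W n ^ ((t:ℤ) * s) := by
    intro k hk
    rw [sum_range_mod n hn k
      (fun j => (a j : ℂ) * W n ^ ((j:ℤ) * s) * ((a k : ℂ) * W n ^ (-((k:ℤ) * s))))]
    refine Finset.sum_congr rfl fun t ht => ?_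
    simp only [Finset.mem_range] at ht hk
    have hW : W n ^ (((((k + t) % n : ℕ)):ℤ) * s) * W n ^ (-((k:ℤ) * s)) = W n ^ ((t:ℤ) * s) := by
      rw [← zpow_add₀ (W_ne n)]
      apply W_congr n hn
      have hx : ((((k + t) % n : ℕ)):ℤ) ≡ (k:ℤ) + t [ZMOD (n:ℤ)] := by
        unfold Int.ModEq
        calc (((((k + t) % n : ℕ)):ℤ)) % (n:ℤ)
            = ((((k + t) % n % n : ℕ)):ℤ) := (Int.natCast_mod _ _).symm
          _ = ((((k + t) % n : ℕ)):ℤ) := by rw [Nat.mod_mod_of_dvd _ dvd_rfl]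
          _ = (((k + t : ℕ)):ℤ) % (n:ℤ) := Int.natCast_mod _ _
          _ = ((k:ℤ) + t) % (n:ℤ) := by norm_cast
      have h2 := (hx.mul_right s).sub_right ((k:ℤ) * s)
      have e1 : ((((k + t) % n : ℕ)):ℤ) * s - (k:ℤ) * s
          = ((((k + t) % n : ℕ)):ℤ) * s + -((k:ℤ) * s) := by ring
      have e2 : ((k:ℤ) + t) * s - (k:ℤ) * s = (t:ℤ) * s := by ring
      rw [e1, e2] at h2
      exact h2
    rw [← hW]
    ring
  rw [Finset.sum_congr rfl hstep, Finset.sum_comm]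
  refine Finset.sum_congr rfl fun t ht => ?_
  rw [← Finset.sum_mul]
  congr 1
  push_cast [paf]
  ring

lemma dft_symm (n : ℕ) (hn : 0 < n) (a : ℕ → ℤ) (s : ℤ) :
    dft n a ((n : ℤ) - s) = (starRingEnd ℂ) (dft n a s) := by
  rw [dft_eq, dft_eq, map_sum]
  refine Finset.sum_congr rfl fun k _ => ?_
  rw [map_mul, map_intCast, W_conj]
  congr 1
  have : (k : ℤ) * ((n:ℤ) - s) = (k * n) * 1 + -((k:ℤ) * s) := by ring
  rw [this, zpow_add₀ (W_ne n), mul_comm (k:ℤ) (n:ℤ), zpow_mul, zpow_mul, W_n n hn]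
  simp

lemma psd_symm (n : ℕ) (hn : 0 < n) (a : ℕ → ℤ) (s : ℤ) :
    psd n a ((n : ℤ) - s) = psd n a s := by
  rw [psd, psd, dft_symm n hn a s, Complex.norm_conj]

theorem williamson_iff_psd' (n : ℕ) (a b c d : ℕ → ℤ)
    (hpa : PMOne n a) (hpb : PMOne n b) (hpc : PMOne n c) (hpd : PMOne n d) :
    (∀ s, 1 ≤ s → s ≤ n / 2 → paf n a s + paf n b s + paf n c s + paf n d s = 0) ↔
      ∀ s : ℕ, s ≤ n / 2 →
        psd n a s + psd n b s + psd n c s + psd n d s = 4 * n := by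
  constructor
  · intro h s hs
    rcases Nat.eq_zero_or_pos n with h0 | hn
    · subst h0
      interval_cases s
      simp [psd, dft]
    have hQ : ∀ t, 1 ≤ t → t < n → paf n a t + paf n b t + paf n c t + paf n d t = 0 := by
      intro t h1 h2
      by_cases hle : t ≤ n / 2
      · exact h t h1 hle
      · have hv : (t + (n - t)) % n = 0 := by
          rw [Nat.add_sub_cancel' h2.le, Nat.mod_self]
        rw [paf_compl n hn a t (n-t) hv, paf_compl n hn b t (n-t) hv,
          paf_compl n hn c t (n-t) hv, paf_compl n hn d t (n-t) hv]
        exact h (n - t) (by omega) (by omega)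
    have hc : ((psd n a s + psd n b s + psd n c s + psd n d s : ℝ) : ℂ) = ((4 * n : ℝ) : ℂ) := by
      push_cast
      rw [psd_eq n hn a, psd_eq n hn b, psd_eq n hn c, psd_eq n hn d,
        ← Finset.sum_add_distrib, ← Finset.sum_add_distrib, ← Finset.sum_add_distrib]
      rw [Finset.sum_eq_single_of_mem 0 (Finset.mem_range.2 hn)]
      · rw [paf_zero n a hpa, paf_zero n b hpb, paf_zero n c hpc, paf_zero n d hpd]
        push_cast
        simp
        ring
      · intro t ht ht0
        have h1 := hQ t (by omega) (Finset.mem_range.1 ht)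
        have h2 : ((paf n a t : ℂ)) + paf n b t + paf n c t + paf n d t = 0 := by
          exact_mod_cast h1
        linear_combination (h2) * W n ^ ((t:ℤ) * (s:ℤ))
    exact_mod_cast hc
  · intro h s hs1 hs2
    have hn : 0 < n := by omega
    have h' : ∀ s' : ℕ, s' < n →
        psd n a s' + psd n b s' + psd n c s' + psd n d s' = 4 * n := by
      intro s' hlt
      by_cases hle : s' ≤ n / 2
      · exact h s' hle
      · have hcast : (((n - s' : ℕ)) : ℤ) = (n : ℤ) - s' := by omega
        have hsym : ∀ x : ℕ → ℤ, psd n x ((s' : ℕ) : ℤ) = psd n x (((n - s' : ℕ)) : ℤ) := by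
          intro x
          rw [hcast, psd_symm n hn]
        rw [hsym a, hsym b, hsym c, hsym d]
        exact h (n - s') (by omega)
    have hC : ∀ s' : ℕ, s' < n →
        ∑ t ∈ Finset.range n,
          ((paf n a t + paf n b t + paf n c t + paf n d t : ℤ) : ℂ) * W n ^ ((t:ℤ) * (s':ℤ))
          = 4 * n := by
      intro s' hlt
      have hc : ((psd n a s' + psd n b s' + psd n c s' + psd n d s' : ℝ) : ℂ)
          = ((4 * n : ℝ) : ℂ) := by exact_mod_cast congrArg Complex.ofReal (h' s' hlt)
      push_cast at hc ⊢
      rw [psd_eq n hn a, psd_eq n hn b, psd_eq n hn c, psd_eq n hn d,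
        ← Finset.sum_add_distrib, ← Finset.sum_add_distrib, ← Finset.sum_add_distrib] at hc
      rw [← hc]
      refine Finset.sum_congr rfl fun t ht => ?_
      push_cast
      ring
    -- main double-sum computation
    have hdvd : ¬ ((n : ℤ) ∣ (-(s : ℤ))) := by
      rw [dvd_neg]
      intro hd
      have := Int.le_of_dvd (by exact_mod_cast hs1) hd
      omega
    have way1 : ∑ s' ∈ Finset.range n,
        (∑ t ∈ Finset.range n,
          ((paf n a t + paf n b t + paf n c t + paf n d t : ℤ) : ℂ) * W n ^ ((t:ℤ) * (s':ℤ)))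
          * W n ^ ((-(s:ℤ)) * (s':ℤ)) = 0 := by
      rw [Finset.sum_congr rfl fun s' hs' => by
        rw [hC s' (Finset.mem_range.1 hs')]]
      rw [← Finset.mul_sum, W_sum n hn, if_neg hdvd, mul_zero]
    have way2 : ∑ s' ∈ Finset.range n,
        (∑ t ∈ Finset.range n,
          ((paf n a t + paf n b t + paf n c t + paf n d t : ℤ) : ℂ) * W n ^ ((t:ℤ) * (s':ℤ)))
          * W n ^ ((-(s:ℤ)) * (s':ℤ))
        = ((paf n a s + paf n b s + paf n c s + paf n d s : ℤ) : ℂ) * n := by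
      have step1 : ∀ s' ∈ Finset.range n,
          (∑ t ∈ Finset.range n,
            ((paf n a t + paf n b t + paf n c t + paf n d t : ℤ) : ℂ) * W n ^ ((t:ℤ) * (s':ℤ)))
            * W n ^ ((-(s:ℤ)) * (s':ℤ))
          = ∑ t ∈ Finset.range n,
            ((paf n a t + paf n b t + paf n c t + paf n d t : ℤ) : ℂ)
              * W n ^ (((t:ℤ) - (s:ℤ)) * (s':ℤ)) := by
        intro s' _
        rw [Finset.sum_mul]
        refine Finset.sum_congr rfl fun t _ => ?_
        rw [mul_assoc, ← zpow_add₀ (W_ne n)]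
        congr 2
        ring
      rw [Finset.sum_congr rfl step1, Finset.sum_comm]
      have step2 : ∀ t ∈ Finset.range n,
          ∑ s' ∈ Finset.range n,
            ((paf n a t + paf n b t + paf n c t + paf n d t : ℤ) : ℂ)
              * W n ^ (((t:ℤ) - (s:ℤ)) * (s':ℤ))
          = ((paf n a t + paf n b t + paf n c t + paf n d t : ℤ) : ℂ)
              * (if (n:ℤ) ∣ ((t:ℤ) - (s:ℤ)) then (n:ℂ) else 0) := by
        intro t _
        rw [← Finset.mul_sum, W_sum n hn]
      rw [Finset.sum_congr rfl step2]
      rw [Finset.sum_eq_single_of_mem s (Finset.mem_range.2 (by omega))]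
      · simp
      · intro t ht htne
        have : ¬ ((n:ℤ) ∣ ((t:ℤ) - (s:ℤ))) := by
          intro hd
          have h0 := Int.eq_zero_of_abs_lt_dvd hd ?_
          · have : t = s := by omega
            exact htne this
          · have ht' := Finset.mem_range.1 ht
            rw [abs_sub_lt_iff]
            constructor <;> [omega; omega]
        rw [if_neg this, mul_zero]
    have heq := way1.symm.trans way2
    have hz : ((paf n a s + paf n b s + paf n c s + paf n d s : ℤ) : ℂ) = 0 := by
      rcases mul_eq_zero.mp heq.symm with h0 | h0
      · exact h0
      · exact absurd h0 (by exact_mod_cast hn.ne')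
    exact_mod_cast hz

theorem williamson_iff_psd (n : ℕ) (a b c d : ℕ → ℤ)
    (hsa : SymmSeq n a) (hsb : SymmSeq n b) (hsc : SymmSeq n c) (hsd : SymmSeq n d)
    (hpa : PMOne n a) (hpb : PMOne n b) (hpc : PMOne n c) (hpd : PMOne n d) :
    (∀ s, 1 ≤ s → s ≤ n / 2 → paf n a s + paf n b s + paf n c s + paf n d s = 0) ↔
      ∀ s : ℕ, s ≤ n / 2 →
        psd n a s + psd n b s + psd n c s + psd n d s = 4 * n :=
  williamson_iff_psd' n a b c d hpa hpb hpc hpd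
end

section
/- Let n be even and let A, B, C, D be a Williamson sequence of order n. Let Ã be the cyclic shift of A by offset n/2, i.e., ã_i = a_{(i+n/2) mod n}. Then Ã, B, C, D is a Williamson sequence of order n (in particular, Ã is again symmetric). -/
/-- `a,b,c,d` are Williamson sequences of order `n`. -/
def IsWilliamson (n : ℕ) (a b c d : ℕ → ℤ) : Prop :=
  SymmSeq n a ∧ SymmSeq n b ∧ SymmSeq n c ∧ SymmSeq n d ∧
  PMOne n a ∧ PMOne n b ∧ PMOne n c ∧ PMOne n d ∧
  ∀ s, 1 ≤ s → s ≤ n / 2 → paf n a s + paf n b s + paf n c s + paf n d s = 0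

/-- The cyclic shift of the length-`n` sequence `a` by offset `r`:
its `i`-th entry is `a_{(i+r) mod n}`. -/
def cshift (n r : ℕ) (a : ℕ → ℤ) (i : ℕ) : ℤ := a ((i + r) % n)

lemma sum_shift (n r : ℕ) (f : ℕ → ℤ) :
    ∑ k ∈ Finset.range n, f ((k + r) % n) = ∑ k ∈ Finset.range n, f k := by
  rcases Nat.eq_zero_or_pos n with h | h
  · simp [h]
  have hdiv := Nat.mod_add_div r n
  have hrn : r % n < n := Nat.mod_lt _ h
  refine Finset.sum_nbij' (fun i => (i + r) % n) (fun j => (j + (n - r % n)) % n) ?_ ?_ ?_ ?_ ?_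
  · intro i hi; exact Finset.mem_range.mpr (Nat.mod_lt _ h)
  · intro j hj; exact Finset.mem_range.mpr (Nat.mod_lt _ h)
  · intro i hi
    have hi' : i < n := Finset.mem_range.mp hi
    calc ((i + r) % n + (n - r % n)) % n = (i + r + (n - r % n)) % n := Nat.mod_add_mod ..
      _ = (i + n * (r / n) + n) % n := by ring_nf; congr 1; omega
      _ = i := by rw [Nat.add_mod_right, Nat.add_mul_mod_self_left, Nat.mod_eq_of_lt hi']
  · intro j hj
    have hj' : j < n := Finset.mem_range.mp hj
    calc ((j + (n - r % n)) % n + r) % n = (j + (n - r % n) + r) % n := Nat.mod_add_mod ..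
      _ = (j + n * (r / n) + n) % n := by ring_nf; congr 1; omega
      _ = j := by rw [Nat.add_mod_right, Nat.add_mul_mod_self_left, Nat.mod_eq_of_lt hj']
  · intro i hi; rfl

lemma paf_cshift (n r s : ℕ) (hn : 0 < n) (a : ℕ → ℤ) :
    paf n (cshift n r a) s = paf n a s := by
  unfold paf cshift
  have key : ∀ k, a ((k + r) % n) * a (((k + s) % n + r) % n)
      = a ((k + r) % n) * a (((k + r) % n + s) % n) := by
    intro k
    congr 2
    rw [Nat.mod_add_mod, Nat.mod_add_mod]
    ring_nf
  simp_rw [key]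
  exact sum_shift n r (fun k => a k * a ((k + s) % n))

theorem williamson_half_shift (n : ℕ) (heven : Even n) (a b c d : ℕ → ℤ)
    (hW : IsWilliamson n a b c d) :
    IsWilliamson n (cshift n (n / 2) a) b c d := by
  obtain ⟨m, hm⟩ := heven
  have hm2 : n = 2 * m := by omega
  obtain ⟨hsa, hsb, hsc, hsd, hpa, hpb, hpc, hpd, hpaf⟩ := hW
  refine ⟨?_, hsb, hsc, hsd, ?_, hpb, hpc, hpd, ?_⟩
  · -- symmetric
    intro i hi1 hin
    have hn : 0 < n := lt_of_le_of_lt (Nat.zero_le _) hin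
    have hmn : n / 2 = m := by omega
    unfold cshift
    rw [hmn]
    rcases lt_trichotomy i m with hlt | heq | hgt
    · have h1 : (i + m) % n = i + m := Nat.mod_eq_of_lt (by omega)
      have h2 : (n - i + m) % n = m - i := by
        have : n - i + m = (m - i) + n := by omega
        rw [this, Nat.add_mod_right, Nat.mod_eq_of_lt (by omega)]
      rw [h1, h2]
      have := hsa (i + m) (by omega) (by omega)
      rw [this]; congr 1; omega
    · have h1 : (i + m) % n = 0 := by
        have : i + m = n := by omega
        simp [this]
      have h2 : (n - i + m) % n = 0 := by
        have : n - i + m = n := by omega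
        simp [this]
      rw [h1, h2]
    · have h1 : (i + m) % n = i - m := by
        have : i + m = (i - m) + n := by omega
        rw [this, Nat.add_mod_right, Nat.mod_eq_of_lt (by omega)]
      have h2 : (n - i + m) % n = n - i + m := Nat.mod_eq_of_lt (by omega)
      rw [h1, h2]
      have := hsa (i - m) (by omega) (by omega)
      rw [this]; congr 1; omega
  · -- PMOne
    intro i hin
    have hn : 0 < n := lt_of_le_of_lt (Nat.zero_le _) hin
    exact hpa _ (Nat.mod_lt _ hn)
  · intro s hs1 hs2
    have hn : 0 < n := by omega
    rw [paf_cshift n (n / 2) s hn a]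
    exact hpaf s hs1 hs2
end
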